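/- Let f(ε) = log(Γ(b+ε)/Γ(a+ε)) + (a−1+ε)(ψ(a+ε) − ψ(b+ε)) for ε ≥ 0, where 1 ≤ a < b. Then f is increasing in ε. -/

import Mathlib

open Real Filter Set Topology

/-- The digamma function `ψ = (log ∘ Γ)'`. -/
noncomputable def digamma (x : ℝ) : ℝ := deriv (fun y => Real.log (Real.Gamma y)) x

section KLAux

noncomputable def dg (n : ℕ) (x : ℝ) : ℝ :=
  Real.log n - ∑ k ∈ Finset.range (n + 1), (x + k)⁻¹
noncomputable def psiLim (x : ℝ) : ℝ :=
  (∑' k : ℕ, (((k : ℝ) + 1)⁻¹ - (x + k)⁻¹)) - Real.eulerMascheroniConstant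

lemma dg_eq (n : ℕ) (x : ℝ) :
    dg n x = (Real.log n - (harmonic (n + 1) : ℝ)) +
      ∑ k ∈ Finset.range (n + 1), (((k : ℝ) + 1)⁻¹ - (x + k)⁻¹) := by
  rw [dg, Finset.sum_sub_distrib]
  push_cast [harmonic]
  ring

lemma const_tendsto :
    Tendsto (fun n : ℕ => Real.log n - (harmonic (n + 1) : ℝ)) atTop
      (𝓝 (-Real.eulerMascheroniConstant)) := by
  have h1 : Tendsto (fun n : ℕ => (harmonic (n+1) : ℝ) - Real.log (n+1)) atTop
      (𝓝 Real.eulerMascheroniConstant) := by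
    have := Real.tendsto_harmonic_sub_log.comp (tendsto_add_atTop_nat 1)
    simpa [Function.comp_def] using this
  have h2 := Real.tendsto_log_nat_add_one_sub_log
  have := (h1.add h2).neg
  simp only [neg_add, add_zero] at this
  convert this using 2 with n
  push_cast
  ring

lemma summable_bound (c : ℝ) : Summable (fun k : ℕ => c * (((k:ℝ) + 1) ^ 2)⁻¹) := by
  apply Summable.mul_left
  have : Summable (fun k : ℕ => ((k:ℝ) ^ 2)⁻¹) := by
    simpa using Real.summable_one_div_nat_pow.2 (by norm_num : 1 < 2)
  simpa using (summable_nat_add_iff 1).2 this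

lemma tuo_Icc {δ R : ℝ} (hδ : 0 < δ) (hδ1 : δ ≤ 1) :
    TendstoUniformlyOn (fun n x => dg n x) psiLim atTop (Icc δ R) := by
  have hsum : TendstoUniformlyOn
      (fun (N : ℕ) (x : ℝ) => ∑ k ∈ Finset.range N, (((k : ℝ) + 1)⁻¹ - (x + k)⁻¹))
      (fun x => ∑' k : ℕ, (((k : ℝ) + 1)⁻¹ - (x + k)⁻¹)) atTop (Icc δ R) := by
    apply tendstoUniformlyOn_tsum_nat (u := fun k => (R + 1) / δ * (((k:ℝ) + 1) ^ 2)⁻¹)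
      (summable_bound _)
    intro k x hx
    obtain ⟨hx1, hx2⟩ := hx
    have hxpos : 0 < x := lt_of_lt_of_le hδ hx1
    have hxk : 0 < x + k := by positivity
    have hk1 : (0:ℝ) < (k:ℝ) + 1 := by positivity
    have key : ((k : ℝ) + 1)⁻¹ - (x + k)⁻¹ = (x - 1) / (((k:ℝ) + 1) * (x + k)) := by
      field_simp
      ring
    have h1 : |x - 1| ≤ R + 1 := by
      rw [abs_le]; constructor <;> nlinarith
    have h2 : δ * (((k:ℝ)+1)^2) ≤ ((k:ℝ)+1) * (x + k) := by
      have hb : δ * ((k:ℝ)+1) ≤ x + k := by nlinarith [Nat.cast_nonneg (α := ℝ) k]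
      nlinarith [mul_le_mul_of_nonneg_left hb hk1.le]
    have E : |x - 1| * (δ * (((k:ℝ)+1)^2)) ≤ (R+1) * (((k:ℝ)+1) * (x+k)) :=
      mul_le_mul h1 h2 (by positivity) (by nlinarith)
    have hrhs : (R + 1) / δ * ((((k:ℝ) + 1) ^ 2))⁻¹ = (R+1) / (δ * ((k:ℝ)+1)^2) := by
      field_simp
    rw [key, Real.norm_eq_abs, abs_div, abs_of_pos (mul_pos hk1 hxk), hrhs,
      div_le_div_iff₀ (mul_pos hk1 hxk) (by positivity)]
    linarith [E]
  -- shift index: range (n+1) instead of range n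
  have hsum' : TendstoUniformlyOn
      (fun (n : ℕ) (x : ℝ) => ∑ k ∈ Finset.range (n+1), (((k : ℝ) + 1)⁻¹ - (x + k)⁻¹))
      (fun x => ∑' k : ℕ, (((k : ℝ) + 1)⁻¹ - (x + k)⁻¹)) atTop (Icc δ R) := by
    intro u hu
    exact (tendsto_add_atTop_nat 1).eventually (hsum u hu)
  have hconst : TendstoUniformlyOn
      (fun (n : ℕ) (_ : ℝ) => Real.log n - (harmonic (n + 1) : ℝ))
      (fun _ => -Real.eulerMascheroniConstant) atTop (Icc δ R) := by
    rw [Metric.tendstoUniformlyOn_iff]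
    intro ε hε
    have h := const_tendsto.eventually (Metric.ball_mem_nhds (-Real.eulerMascheroniConstant) hε)
    filter_upwards [h] with n hn x _
    simpa [Metric.mem_ball, dist_comm] using hn
  have := hconst.add hsum'
  refine (this.congr ?_).congr_right ?_
  · filter_upwards with n x hx
    exact (dg_eq n x).symm
  · intro x _
    simp only [Pi.add_apply, psiLim]
    ring

lemma tlu : TendstoLocallyUniformlyOn (fun n x => dg n x) psiLim atTop (Ioi 0) := by
  rw [tendstoLocallyUniformlyOn_iff_forall_isCompact isOpen_Ioi]
  intro K hK hKc
  rcases K.eq_empty_or_nonempty with rfl | hne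
  · intro u _
    filter_upwards with n x hx
    cases hx
  · obtain ⟨δ, hδK, hδle⟩ := hKc.exists_isLeast hne
    obtain ⟨R, hR⟩ := hKc.bddAbove
    have hδpos : 0 < δ := hK hδK
    refine (tuo_Icc (R := R) (lt_min hδpos one_pos) (min_le_right _ _)).mono ?_
    intro x hx
    exact ⟨le_trans (min_le_left _ _) (hδle hx), hR hx⟩

lemma hasDerivAt_logGammaSeq {x : ℝ} (hx : 0 < x) (n : ℕ) :
    HasDerivAt (fun y => Real.BohrMollerup.logGammaSeq y n) (dg n x) x := by
  unfold Real.BohrMollerup.logGammaSeq dg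
  have h1 : HasDerivAt (fun y : ℝ => y * Real.log n) (Real.log n) x := by
    simpa using (hasDerivAt_id x).mul_const (Real.log n)
  have h2 : HasDerivAt (fun y : ℝ => ∑ m ∈ Finset.range (n + 1), Real.log (y + m))
      (∑ m ∈ Finset.range (n + 1), (x + m)⁻¹) x := by
    refine HasDerivAt.fun_sum fun m _ => ?_
    have hne : x + m ≠ 0 := by positivity
    simpa [Function.comp_def] using (Real.hasDerivAt_log hne).comp x ((hasDerivAt_id x).add_const (m : ℝ))
  simpa using (h1.add_const (Real.log (Nat.factorial n))).fun_sub h2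

lemma hasDerivAt_logGamma {x : ℝ} (hx : 0 < x) :
    HasDerivAt (fun y => Real.log (Real.Gamma y)) (digamma x) x := by
  have h1 : DifferentiableAt ℝ Real.Gamma x := by
    refine Real.differentiableAt_Gamma (fun m => ?_)
    have : (0:ℝ) ≤ m := Nat.cast_nonneg m
    intro h; rw [h] at hx; linarith
  exact (h1.log (Real.Gamma_pos_of_pos hx).ne').hasDerivAt

lemma digamma_eq {x : ℝ} (hx : 0 < x) : digamma x = psiLim x := by
  have key : HasDerivAt (fun y => Real.log (Real.Gamma y)) (psiLim x) x := by
    apply hasDerivAt_of_tendstoLocallyUniformlyOn isOpen_Ioi tlu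
      (Filter.Eventually.of_forall fun n y hy => hasDerivAt_logGammaSeq hy n)
      (fun y hy => Real.BohrMollerup.tendsto_log_gamma hy) hx
  exact (hasDerivAt_logGamma hx).unique key

lemma convexOn_finset_sum {ι : Type*} (t : Finset ι) {g : ι → ℝ → ℝ}
    (h : ∀ i ∈ t, ConvexOn ℝ (Ioi 0) (g i)) :
    ConvexOn ℝ (Ioi 0) (fun x => ∑ i ∈ t, g i x) := by
  classical
  induction t using Finset.induction with
  | empty => simpa using convexOn_const 0 (convex_Ioi 0)
  | @insert a s hnotmem ih =>
      simp_rw [Finset.sum_insert hnotmem]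
      exact (h _ (Finset.mem_insert_self a s)).add
        (ih fun i hi => h i (Finset.mem_insert_of_mem hi))

lemma concave_dg (n : ℕ) : ConcaveOn ℝ (Ioi 0) (dg n) := by
  have hconv : ConvexOn ℝ (Ioi 0) (fun x : ℝ => ∑ k ∈ Finset.range (n+1), (x + (k:ℝ))⁻¹) := by
    refine convexOn_finset_sum _ fun k _ => ?_
    have base : ConvexOn ℝ (Ioi 0) (fun x : ℝ => x ^ (-1 : ℤ)) :=
      (strictConvexOn_zpow (by norm_num) (by norm_num)).convexOn
    have htr := base.translate_left (k : ℝ)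
    have hsub : Ioi (0:ℝ) ⊆ (fun z : ℝ => (k:ℝ) + z) ⁻¹' Ioi 0 := by
      intro z hz
      simp only [mem_preimage, mem_Ioi] at hz ⊢
      positivity
    have := htr.subset hsub (convex_Ioi 0)
    simpa [Function.comp_def, zpow_neg_one] using this
  have := (hconv.neg).add_const (Real.log n)
  refine this.congr fun x _ => ?_
  simp only [dg, Pi.add_apply, Pi.neg_apply]
  ring

lemma concave_digamma : ConcaveOn ℝ (Ioi 0) digamma := by
  refine ⟨convex_Ioi 0, fun x hx y hy w v hw hv hwv => ?_⟩
  have hxy : w • x + v • y ∈ Ioi 0 := (convex_Ioi 0) hx hy hw hv hwv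
  rw [digamma_eq hxy, digamma_eq hx, digamma_eq hy]
  refine le_of_tendsto_of_tendsto'
    (((tlu.tendsto_at hx).const_mul w).add ((tlu.tendsto_at hy).const_mul v))
    (tlu.tendsto_at hxy) (fun n => ?_)
  simpa [smul_eq_mul] using (concave_dg n).2 hx hy hw hv hwv

lemma four_point {x₁ x₂ d : ℝ} (h1 : 0 < x₁) (h12 : x₁ ≤ x₂) (hd : 0 < d) :
    digamma (x₂ + d) + digamma x₁ ≤ digamma (x₁ + d) + digamma x₂ := by
  rcases eq_or_lt_of_le h12 with rfl | hlt
  · exact le_of_eq (by ring)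
  · have hden : 0 < x₂ - x₁ + d := by linarith
    have hθ : ((x₂ - x₁) / (x₂ - x₁ + d)) * (x₂ - x₁ + d) = x₂ - x₁ :=
      div_mul_cancel₀ _ hden.ne'
    set θ : ℝ := (x₂ - x₁) / (x₂ - x₁ + d) with hθdef
    have hθ0 : 0 < θ := div_pos (by linarith) hden
    have hθ1 : θ < 1 := (div_lt_one hden).2 (by linarith)
    have hmem1 : x₂ + d ∈ Ioi (0:ℝ) := by simp only [mem_Ioi]; linarith
    have hmem2 : x₁ ∈ Ioi (0:ℝ) := h1
    have e1 : θ • (x₂ + d) + (1 - θ) • x₁ = x₂ := by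
      simp only [smul_eq_mul]
      linear_combination hθ
    have e2 : (1 - θ) • (x₂ + d) + θ • x₁ = x₁ + d := by
      simp only [smul_eq_mul]
      linear_combination -hθ
    have hsum : θ + (1 - θ) = 1 := by ring
    have hsum2 : (1 - θ) + θ = 1 := by ring
    have c1 := concave_digamma.2 hmem1 hmem2 hθ0.le (by linarith : (0:ℝ) ≤ 1 - θ) hsum
    have c2 := concave_digamma.2 hmem1 hmem2 (by linarith : (0:ℝ) ≤ 1 - θ) hθ0.le hsum2
    rw [e1] at c1
    rw [e2] at c2
    simp only [smul_eq_mul] at c1 c2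
    nlinarith [c1, c2]


end KLAux

/-- For `1 ≤ a < b`, the function
`f(ε) = log(Γ(b+ε)/Γ(a+ε)) + (a−1+ε)(ψ(a+ε) − ψ(b+ε))` is increasing on `[0, ∞)`. -/
theorem kl_terms_monotone (a b : ℝ) (ha : 1 ≤ a) (hab : a < b) :
    MonotoneOn
      (fun ε => Real.log (Real.Gamma (b + ε) / Real.Gamma (a + ε)) +
        (a - 1 + ε) * (digamma (a + ε) - digamma (b + ε)))
      (Set.Ici 0) := by
  intro ε₁ hε₁ ε₂ hε₂ h12
  rcases eq_or_lt_of_le h12 with rfl | hlt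
  · exact le_refl _
  simp only [Set.mem_Ici] at hε₁ hε₂
  have hG : ∀ t : ℝ, 0 ≤ t →
      HasDerivAt (fun s => Real.log (Real.Gamma (b + s)) - Real.log (Real.Gamma (a + s)))
        (digamma (b + t) - digamma (a + t)) t := by
    intro t ht
    have h1 : HasDerivAt (fun s : ℝ => Real.log (Real.Gamma (b + s))) (digamma (b + t)) t := by
      have := (hasDerivAt_logGamma (show 0 < b + t by linarith)).comp t
        ((hasDerivAt_id t).const_add b)
      simpa [Function.comp_def] using this
    have h2 : HasDerivAt (fun s : ℝ => Real.log (Real.Gamma (a + s))) (digamma (a + t)) t := by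
      have := (hasDerivAt_logGamma (show 0 < a + t by linarith)).comp t
        ((hasDerivAt_id t).const_add a)
      simpa [Function.comp_def] using this
    exact h1.sub h2
  obtain ⟨c, hc, hceq⟩ := exists_hasDerivAt_eq_slope
    (fun s => Real.log (Real.Gamma (b + s)) - Real.log (Real.Gamma (a + s)))
    (fun t => digamma (b + t) - digamma (a + t)) hlt
    (fun t ht => (hG t (le_trans hε₁ ht.1)).continuousAt.continuousWithinAt)
    (fun t ht => hG t (le_trans hε₁ ht.1.le))
  have hc1 : 0 ≤ c := le_trans hε₁ hc.1.le
  -- G ε₂ - G ε₁ = (ε₂ - ε₁) * (ψ(b+c) - ψ(a+c))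
  have hGdiff : (Real.log (Real.Gamma (b + ε₂)) - Real.log (Real.Gamma (a + ε₂))) -
      (Real.log (Real.Gamma (b + ε₁)) - Real.log (Real.Gamma (a + ε₁)))
      = (ε₂ - ε₁) * (digamma (b + c) - digamma (a + c)) := by
    rw [hceq, mul_div_assoc', mul_comm, mul_div_assoc,
      div_self (by linarith : ε₂ - ε₁ ≠ 0), mul_one]
  have h4 := four_point (show 0 < a + c by linarith)
    (show a + c ≤ a + ε₂ by linarith [hc.2]) (show 0 < b - a by linarith)
  rw [show a + ε₂ + (b - a) = b + ε₂ by ring, show a + c + (b - a) = b + c by ring] at h4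
  have h5 := four_point (show 0 < a + ε₁ by linarith)
    (show a + ε₁ ≤ a + ε₂ by linarith) (show 0 < b - a by linarith)
  rw [show a + ε₂ + (b - a) = b + ε₂ by ring, show a + ε₁ + (b - a) = b + ε₁ by ring] at h5
  have hlog1 : Real.log (Real.Gamma (b + ε₁) / Real.Gamma (a + ε₁))
      = Real.log (Real.Gamma (b + ε₁)) - Real.log (Real.Gamma (a + ε₁)) :=
    Real.log_div (Real.Gamma_pos_of_pos (by linarith)).ne' (Real.Gamma_pos_of_pos (by linarith)).ne'
  have hlog2 : Real.log (Real.Gamma (b + ε₂) / Real.Gamma (a + ε₂))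
      = Real.log (Real.Gamma (b + ε₂)) - Real.log (Real.Gamma (a + ε₂)) :=
    Real.log_div (Real.Gamma_pos_of_pos (by linarith)).ne' (Real.Gamma_pos_of_pos (by linarith)).ne'
  simp only [hlog1, hlog2]
  nlinarith [mul_le_mul_of_nonneg_left h4 (show (0:ℝ) ≤ ε₂ - ε₁ by linarith),
    mul_le_mul_of_nonneg_left h5 (show (0:ℝ) ≤ a - 1 + ε₁ by linarith)]
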